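/- arXiv:2512.13091 — 3 statements merged into one kernel-verified Lean document; each statement's English description precedes it below -/
import Mathlib

section
/- For any Dirichlet character χ modulo L whose square χ² is non-principal, the sum over r ≤ √Y of φ(r²)·χ²(r)/r is O_ε(Y^{1/2+ε}). -/
open Finset

private lemma tot_sq (n : ℕ) (hn : n ≠ 0) : Nat.totient (n^2) = n * Nat.totient n := by
  rw [Nat.totient_eq_prod_factorization (pow_ne_zero 2 hn),
      Nat.totient_eq_prod_factorization hn, Nat.factorization_pow]
  rw [Finsupp.prod, Finsupp.prod, Finsupp.support_smul_eq (by norm_num)]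
  calc ∏ p ∈ n.factorization.support, p ^ ((2 • n.factorization) p - 1) * (p - 1)
      = ∏ p ∈ n.factorization.support,
          p ^ n.factorization p * (p ^ (n.factorization p - 1) * (p - 1)) := by
        refine Finset.prod_congr rfl fun p hp => ?_
        have hk : n.factorization p ≠ 0 := Finsupp.mem_support_iff.mp hp
        rw [Finsupp.smul_apply, smul_eq_mul,
          show 2 * n.factorization p - 1 = n.factorization p + (n.factorization p - 1) by omega,
          pow_add, mul_assoc]
    _ = (∏ p ∈ n.factorization.support, p ^ n.factorization p) *
          ∏ p ∈ n.factorization.support, p ^ (n.factorization p - 1) * (p - 1) :=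
        Finset.prod_mul_distrib
    _ = n * ∏ p ∈ n.factorization.support, p ^ (n.factorization p - 1) * (p - 1) := by
        rw [show ∏ p ∈ n.factorization.support, p ^ n.factorization p = n from
          Nat.factorization_prod_pow_eq_self hn]

private lemma sum_window {L : ℕ} [NeZero L] (ψ : DirichletCharacter ℂ L) (hψ : ψ ≠ 1) (a : ℕ) :
    ∑ k ∈ range L, ψ ((a + k : ℕ) : ZMod L) = 0 := by
  rw [show ∑ k ∈ range L, ψ ((a + k : ℕ) : ZMod L) = ∑ x : ZMod L, ψ x from ?_]
  · exact MulChar.sum_eq_zero_of_ne_one hψ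
  refine Finset.sum_nbij' (fun k => ((a + k : ℕ) : ZMod L))
    (fun x => (x - (a : ZMod L)).val) (fun k _ => Finset.mem_univ _)
    (fun x _ => Finset.mem_range.mpr (ZMod.val_lt _)) (fun k hk => ?_) (fun x _ => ?_)
    (fun k _ => rfl)
  · push_cast
    rw [add_sub_cancel_left, ZMod.val_natCast_of_lt (Finset.mem_range.mp hk)]
  · push_cast
    rw [ZMod.natCast_val, ZMod.cast_id, add_sub_cancel]

private lemma S_bound {L : ℕ} (ψ : DirichletCharacter ℂ L) (hψ : ψ ≠ 1) (n : ℕ) :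
    ‖∑ i ∈ range n, ψ (i : ZMod L)‖ ≤ (L : ℝ) + 1 := by
  rcases Nat.eq_zero_or_pos L with rfl | hL0
  · have h : ∀ i ∈ range n, ψ (i : ZMod 0) = if i = 1 then ψ (1 : ZMod 0) else 0 := by
      intro i _
      split_ifs with hi
      · subst hi; norm_num
      · apply ψ.map_nonunit
        intro hu
        rcases Int.isUnit_iff.mp hu with h1 | h1
        · exact hi (by have h3 : (i : ℤ) = 1 := h1; omega)
        · have h2 : (i : ℤ) = -1 := h1
          have : (0:ℤ) ≤ (i:ℤ) := Int.natCast_nonneg i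
          omega
    rw [Finset.sum_congr rfl h, Finset.sum_ite_eq' (range n) 1 (fun _ => ψ (1:ZMod 0))]
    split_ifs
    · simp
    · simp
  · haveI : NeZero L := ⟨hL0.ne'⟩
    induction n using Nat.strong_induction_on with
    | _ n ih =>
      rcases lt_or_ge n L with h | h
      · calc ‖∑ i ∈ range n, ψ (i : ZMod L)‖ ≤ ∑ i ∈ range n, ‖ψ (i : ZMod L)‖ :=
              norm_sum_le _ _
          _ ≤ ∑ _i ∈ range n, (1:ℝ) :=
              Finset.sum_le_sum fun i _ => DirichletCharacter.norm_le_one ψ _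
          _ = n := by simp
          _ ≤ (L : ℝ) + 1 := by exact_mod_cast by omega
      · have hn : n = (n - L) + L := by omega
        rw [hn, Finset.sum_range_add]
        have h0 : ∑ i ∈ range L, ψ (((n - L) + i : ℕ) : ZMod L) = 0 := sum_window ψ hψ _
        rw [h0, add_zero]
        exact ih (n - L) (by omega)

private lemma E_bound {L : ℕ} (ψ : DirichletCharacter ℂ L) (hψ : ψ ≠ 1) (N : ℕ) :
    ‖∑ i ∈ range N, (i : ℂ) * ψ (i : ZMod L)‖ ≤ 2 * ((L : ℝ) + 1) * N := by
  have h := Finset.sum_range_by_parts (fun i : ℕ => (i : ℂ))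
    (fun i : ℕ => ψ (i : ZMod L)) N
  simp only [smul_eq_mul] at h
  rw [h]
  have hB := S_bound ψ hψ
  calc ‖((N - 1 : ℕ) : ℂ) * ∑ i ∈ range N, ψ (i : ZMod L)
        - ∑ i ∈ range (N - 1), (((i+1 : ℕ) : ℂ) - (i : ℕ)) * ∑ j ∈ range (i+1), ψ (j : ZMod L)‖
      ≤ ‖((N - 1 : ℕ) : ℂ) * ∑ i ∈ range N, ψ (i : ZMod L)‖
        + ‖∑ i ∈ range (N - 1), (((i+1 : ℕ) : ℂ) - (i : ℕ)) * ∑ j ∈ range (i+1), ψ (j : ZMod L)‖ :=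
        norm_sub_le _ _
    _ ≤ (N : ℝ) * ((L : ℝ) + 1) + ∑ i ∈ range (N - 1),
          ‖(((i+1 : ℕ) : ℂ) - (i : ℕ)) * ∑ j ∈ range (i+1), ψ (j : ZMod L)‖ := by
        gcongr
        · rw [norm_mul]
          have h1 : ‖((N - 1 : ℕ) : ℂ)‖ ≤ (N : ℝ) := by
            rw [Complex.norm_natCast]
            exact_mod_cast Nat.sub_le N 1
          exact mul_le_mul h1 (hB N) (norm_nonneg _) (Nat.cast_nonneg N)
        · exact norm_sum_le _ _
    _ ≤ (N : ℝ) * ((L : ℝ) + 1) + ∑ _i ∈ range (N - 1), ((L : ℝ) + 1) := by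
        gcongr with i _
        rw [norm_mul]
        have : (((i+1 : ℕ) : ℂ) - (i : ℕ)) = 1 := by push_cast; ring
        rw [this, norm_one, one_mul]
        exact hB _
    _ ≤ 2 * ((L : ℝ) + 1) * N := by
        rw [Finset.sum_const, card_range, nsmul_eq_mul]
        have h1 : ((N - 1 : ℕ) : ℝ) ≤ (N : ℝ) := by exact_mod_cast Nat.sub_le N 1
        have h2 : (0:ℝ) ≤ (L:ℝ) + 1 := by positivity
        nlinarith [Nat.cast_nonneg (α := ℝ) N]

private lemma rearr (N : ℕ) (F : ℕ → ℕ → ℂ) :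
    ∑ r ∈ Icc 1 N, ∑ p ∈ r.divisorsAntidiagonal, F p.1 p.2
    = ∑ d ∈ Icc 1 N, ∑ e ∈ Icc 1 (N / d), F d e := by
  rw [Finset.sum_sigma' (Icc 1 N) (fun r => r.divisorsAntidiagonal) (fun _ p => F p.1 p.2),
      Finset.sum_sigma' (Icc 1 N) (fun d => Icc 1 (N / d)) (fun d e => F d e)]
  refine Finset.sum_nbij' (fun x => ⟨x.2.1, x.2.2⟩) (fun y => ⟨y.1 * y.2, (y.1, y.2)⟩)
    ?_ ?_ ?_ ?_ ?_
  · rintro ⟨r, d, e⟩ hx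
    simp only [Finset.mem_sigma, Finset.mem_Icc, Nat.mem_divisorsAntidiagonal] at hx ⊢
    obtain ⟨⟨hr1, hr2⟩, hde1, hr0⟩ := hx
    have hd0 : 0 < d := Nat.pos_of_ne_zero fun h => hr0 (by simp [← hde1, h])
    have he0 : 0 < e := Nat.pos_of_ne_zero fun h => hr0 (by simp [← hde1, h])
    have hdeN : d * e ≤ N := hde1 ▸ hr2
    exact ⟨⟨hd0, le_trans (Nat.le_mul_of_pos_right d he0) hdeN⟩,
      he0, (Nat.le_div_iff_mul_le hd0).mpr (by rwa [mul_comm])⟩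
  · rintro ⟨d, e⟩ hy
    simp only [Finset.mem_sigma, Finset.mem_Icc, Nat.mem_divisorsAntidiagonal] at hy ⊢
    obtain ⟨⟨hd1, hd2⟩, he1, he2⟩ := hy
    have hde : e * d ≤ N := (Nat.le_div_iff_mul_le hd1).mp he2
    have hne : d * e ≠ 0 := Nat.mul_ne_zero (by omega) (by omega)
    exact ⟨⟨Nat.one_le_iff_ne_zero.mpr hne, by rwa [mul_comm] at hde⟩, trivial, hne⟩
  · rintro ⟨r, d, e⟩ hx
    rw [Finset.mem_sigma] at hx
    have h := (Nat.mem_divisorsAntidiagonal.mp hx.2).1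
    simp only at h ⊢
    simp only [Sigma.mk.inj_iff]
    exact ⟨h, heq_of_eq rfl⟩
  · rintro ⟨d, e⟩ _; rfl
  · rintro ⟨r, d, e⟩ _; rfl

/-- For any Dirichlet character χ modulo L whose square χ² is non-principal,
∑_{r ≤ √Y} φ(r²)·χ²(r)/r = O_{ε,L}(Y^{1/2+ε}). -/
theorem stmt0 (L : ℕ) (χ : DirichletCharacter ℂ L) (hχ : χ ^ 2 ≠ 1)
    (ε : ℝ) (hε : 0 < ε) :
    ∃ C : ℝ, ∀ Y : ℝ, 1 ≤ Y →
      ‖∑ r ∈ Finset.Icc 1 ⌊Real.sqrt Y⌋₊,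
          (Nat.totient (r ^ 2) : ℂ) * (χ ^ 2) (r : ZMod L) / (r : ℂ)‖
        ≤ C * Y ^ ((1 : ℝ) / 2 + ε) := by
  set ψ : DirichletCharacter ℂ L := χ ^ 2 with hψdef
  set B : ℝ := (L : ℝ) + 1 with hBdef
  have hB0 : 0 < B := by positivity
  -- Möbius identity for totient
  have hM : ∀ r : ℕ, 0 < r →
      ∑ p ∈ r.divisorsAntidiagonal, (ArithmeticFunction.moebius p.1 : ℂ) * (p.2 : ℂ)
        = (Nat.totient r : ℂ) := by
    refine (ArithmeticFunction.sum_eq_iff_sum_mul_moebius_eq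
      (f := fun n => (Nat.totient n : ℂ)) (g := fun n => (n : ℂ))).mp ?_
    intro n _
    exact_mod_cast congrArg (Nat.cast (R := ℂ)) (Nat.sum_totient n)
  -- bound on ∑_{e ≤ M} e ψ(e)
  have hE : ∀ M : ℕ, ‖∑ e ∈ Icc 1 M, (e : ℂ) * ψ (e : ZMod L)‖ ≤ 2 * B * (M + 1) := by
    intro M
    have heq : ∑ e ∈ Icc 1 M, (e : ℂ) * ψ (e : ZMod L)
        = ∑ e ∈ range (M + 1), (e : ℂ) * ψ (e : ZMod L) := by
      rw [range_eq_Ico, Finset.sum_eq_sum_Ico_succ_bot (Nat.succ_pos M)]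
      rw [Nat.cast_zero, zero_mul, zero_add, ← Finset.Ico_add_one_right_eq_Icc]
      rfl
    rw [heq]
    have := E_bound ψ hχ (M + 1)
    simpa using this
  refine ⟨4 * B * (1 + 1 / (2 * ε)) + 2 * B, fun Y hY => ?_⟩
  set N : ℕ := ⌊Real.sqrt Y⌋₊ with hNdef
  have hY0 : (0:ℝ) < Y := by linarith
  have hsq1 : (1:ℝ) ≤ Real.sqrt Y := by
    rw [show (1:ℝ) = Real.sqrt 1 by simp]
    exact Real.sqrt_le_sqrt hY
  have hN1 : 1 ≤ N := Nat.le_floor (by exact_mod_cast hsq1)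
  have hNX : (N : ℝ) ≤ Y ^ ((1:ℝ)/2) := by
    rw [← Real.sqrt_eq_rpow]
    exact Nat.floor_le (Real.sqrt_nonneg Y)
  -- Step 1 & 2: rewrite the sum
  have hstep : ∑ r ∈ Finset.Icc 1 N,
      (Nat.totient (r ^ 2) : ℂ) * ψ (r : ZMod L) / (r : ℂ)
      = ∑ d ∈ Icc 1 N, ((ArithmeticFunction.moebius d : ℂ) * ψ (d : ZMod L))
          * ∑ e ∈ Icc 1 (N / d), (e : ℂ) * ψ (e : ZMod L) := by
    calc ∑ r ∈ Finset.Icc 1 N, (Nat.totient (r ^ 2) : ℂ) * ψ (r : ZMod L) / (r : ℂ)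
        = ∑ r ∈ Icc 1 N, ∑ p ∈ r.divisorsAntidiagonal,
            ((ArithmeticFunction.moebius p.1 : ℂ) * ψ (p.1 : ZMod L))
              * ((p.2 : ℂ) * ψ (p.2 : ZMod L)) := ?_
      _ = ∑ d ∈ Icc 1 N, ∑ e ∈ Icc 1 (N / d),
            ((ArithmeticFunction.moebius d : ℂ) * ψ (d : ZMod L))
              * ((e : ℂ) * ψ (e : ZMod L)) :=
          rearr N (fun d e => ((ArithmeticFunction.moebius d : ℂ) * ψ (d : ZMod L))
            * ((e : ℂ) * ψ (e : ZMod L)))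
      _ = ∑ d ∈ Icc 1 N, ((ArithmeticFunction.moebius d : ℂ) * ψ (d : ZMod L))
            * ∑ e ∈ Icc 1 (N / d), (e : ℂ) * ψ (e : ZMod L) :=
          Finset.sum_congr rfl fun d _ => (Finset.mul_sum _ _ _).symm
    refine Finset.sum_congr rfl fun r hr => ?_
    rw [Finset.mem_Icc] at hr
    have hr0 : r ≠ 0 := by omega
    have hrC : (r : ℂ) ≠ 0 := Nat.cast_ne_zero.mpr hr0
    have h1 : (Nat.totient (r ^ 2) : ℂ) = (r : ℂ) * (Nat.totient r : ℂ) := by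
      rw [tot_sq r hr0]; push_cast; ring
    rw [h1, ← hM r (by omega), mul_assoc, mul_div_cancel_left₀ _ hrC, Finset.sum_mul]
    refine Finset.sum_congr rfl fun p hp => ?_
    obtain ⟨hpe, -⟩ := Nat.mem_divisorsAntidiagonal.mp hp
    have : ψ (r : ZMod L) = ψ (p.1 : ZMod L) * ψ (p.2 : ZMod L) := by
      rw [← map_mul, ← Nat.cast_mul, hpe]
    rw [this]; ring
  rw [hstep]
  -- norm bound
  have hmain : ‖∑ d ∈ Icc 1 N, ((ArithmeticFunction.moebius d : ℂ) * ψ (d : ZMod L))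
      * ∑ e ∈ Icc 1 (N / d), (e : ℂ) * ψ (e : ZMod L)‖
      ≤ ∑ d ∈ Icc 1 N, 2 * B * ((N : ℝ) / d + 1) := by
    refine (norm_sum_le _ _).trans (Finset.sum_le_sum fun d hd => ?_)
    rw [Finset.mem_Icc] at hd
    have hμ : ‖((ArithmeticFunction.moebius d : ℤ) : ℂ) * ψ (d : ZMod L)‖ ≤ 1 := by
      rw [norm_mul, Complex.norm_intCast]
      have h1 : |(ArithmeticFunction.moebius d : ℝ)| ≤ 1 := by
        exact_mod_cast ArithmeticFunction.abs_moebius_le_one (n := d)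
      calc |(ArithmeticFunction.moebius d : ℝ)| * ‖ψ (d : ZMod L)‖
          ≤ 1 * 1 := mul_le_mul h1 (DirichletCharacter.norm_le_one ψ _)
            (norm_nonneg _) zero_le_one
        _ = 1 := one_mul 1
    calc ‖((ArithmeticFunction.moebius d : ℤ) : ℂ) * ψ (d : ZMod L)
          * ∑ e ∈ Icc 1 (N / d), (e : ℂ) * ψ (e : ZMod L)‖
        = ‖((ArithmeticFunction.moebius d : ℤ) : ℂ) * ψ (d : ZMod L)‖
          * ‖∑ e ∈ Icc 1 (N / d), (e : ℂ) * ψ (e : ZMod L)‖ := norm_mul _ _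
      _ ≤ 1 * (2 * B * ((N / d : ℕ) + 1)) :=
          mul_le_mul hμ (hE (N / d)) (norm_nonneg _) zero_le_one
      _ = 2 * B * (((N / d : ℕ) : ℝ) + 1) := by ring
      _ ≤ 2 * B * ((N : ℝ) / d + 1) := by
          gcongr
          exact Nat.cast_div_le
  -- harmonic bound
  have hharm : ∑ d ∈ Icc 1 N, 2 * B * ((N : ℝ) / d + 1)
      ≤ 2 * B * ((N : ℝ) * (1 + Real.log N)) + 2 * B * N := by
    have h1 : ∑ d ∈ Icc 1 N, ((N : ℝ) / d + 1)
        = (N : ℝ) * (∑ d ∈ Icc 1 N, (1 : ℝ) / d) + N := by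
      rw [Finset.sum_add_distrib, Finset.sum_const, Nat.card_Icc]
      simp only [nsmul_eq_mul]
      rw [Finset.mul_sum]
      congr 1
      · exact Finset.sum_congr rfl fun d _ => by ring
      · rw [Nat.add_sub_cancel]; ring
    have h2 : ∑ d ∈ Icc 1 N, (1 : ℝ) / d ≤ 1 + Real.log N := by
      have h3 : ∑ d ∈ Icc 1 N, (1 : ℝ) / d = (harmonic N : ℝ) := by
        rw [harmonic]
        push_cast
        rw [← Finset.Ico_add_one_right_eq_Icc, Finset.sum_Ico_eq_sum_range]
        simp only [Nat.add_sub_cancel]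
        exact Finset.sum_congr rfl fun i _ => by push_cast; rw [one_div, add_comm 1 (i:ℝ)]
      rw [h3]
      exact harmonic_le_one_add_log N
    calc ∑ d ∈ Icc 1 N, 2 * B * ((N : ℝ) / d + 1)
        = 2 * B * ((N : ℝ) * (∑ d ∈ Icc 1 N, (1 : ℝ) / d) + N) := by
          rw [← Finset.mul_sum, h1]
      _ ≤ 2 * B * ((N : ℝ) * (1 + Real.log N) + N) := by
          gcongr
      _ = 2 * B * ((N : ℝ) * (1 + Real.log N)) + 2 * B * N := by ring
  -- analytic bounds
  have hNr : (1:ℝ) ≤ (N:ℝ) := by exact_mod_cast hN1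
  have hYε : (1:ℝ) ≤ Y ^ ε := Real.one_le_rpow hY hε.le
  have hY12 : (1:ℝ) ≤ Y ^ ((1:ℝ)/2) := Real.one_le_rpow hY (by norm_num)
  have hlog : 1 + Real.log N ≤ (1 + 1 / (2 * ε)) * Y ^ ε := by
    have hlog1 : Real.log N ≤ Real.log (Y ^ ((1:ℝ)/2)) :=
      Real.log_le_log (by linarith) hNX
    have hlog2 : Real.log (Y ^ ((1:ℝ)/2)) = (1/2) * Real.log Y := Real.log_rpow hY0 _
    have hlog3 : ε * Real.log Y = Real.log (Y ^ ε) := (Real.log_rpow hY0 ε).symm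
    have hlog4 : Real.log (Y ^ ε) ≤ Y ^ ε - 1 :=
      Real.log_le_sub_one_of_pos (by positivity)
    have hεY : ε * Real.log Y ≤ Y ^ ε := by rw [hlog3]; linarith
    have hlogY0 : 0 ≤ Real.log Y := Real.log_nonneg hY
    have : Real.log N ≤ Y ^ ε / (2 * ε) := by
      rw [hlog2] at hlog1
      rw [div_eq_mul_inv]
      calc Real.log N ≤ (1/2) * Real.log Y := hlog1
        _ = (ε * Real.log Y) * (2 * ε)⁻¹ := by field_simp
        _ ≤ Y ^ ε * (2 * ε)⁻¹ := by
            apply mul_le_mul_of_nonneg_right hεY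
            positivity
    calc 1 + Real.log N ≤ Y ^ ε + Y ^ ε / (2 * ε) := by linarith
      _ = (1 + 1 / (2 * ε)) * Y ^ ε := by field_simp
  have hsplit : Y ^ ((1:ℝ)/2 + ε) = Y ^ ((1:ℝ)/2) * Y ^ ε := Real.rpow_add hY0 _ _
  -- combine
  have hfinal : 2 * B * ((N : ℝ) * (1 + Real.log N)) + 2 * B * N
      ≤ (4 * B * (1 + 1 / (2 * ε)) + 2 * B) * Y ^ ((1:ℝ)/2 + ε) := by
    have hlogN0 : 0 ≤ Real.log N := Real.log_nonneg hNr
    have hc1 : 2 * B * ((N : ℝ) * (1 + Real.log N))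
        ≤ 2 * B * (Y ^ ((1:ℝ)/2) * ((1 + 1 / (2 * ε)) * Y ^ ε)) := by
      apply mul_le_mul_of_nonneg_left _ (by positivity)
      apply mul_le_mul hNX hlog (by linarith) (by positivity)
    have hc2 : 2 * B * (N : ℝ) ≤ 2 * B * (Y ^ ((1:ℝ)/2) * Y ^ ε) := by
      apply mul_le_mul_of_nonneg_left _ (by positivity)
      calc (N:ℝ) ≤ Y ^ ((1:ℝ)/2) := hNX
        _ = Y ^ ((1:ℝ)/2) * 1 := by ring
        _ ≤ Y ^ ((1:ℝ)/2) * Y ^ ε := by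
            apply mul_le_mul_of_nonneg_left hYε (by positivity)
    rw [hsplit]
    calc 2 * B * ((N : ℝ) * (1 + Real.log N)) + 2 * B * N
        ≤ 2 * B * (Y ^ ((1:ℝ)/2) * ((1 + 1 / (2 * ε)) * Y ^ ε))
          + 2 * B * (Y ^ ((1:ℝ)/2) * Y ^ ε) := by linarith
      _ ≤ (4 * B * (1 + 1 / (2 * ε)) + 2 * B) * (Y ^ ((1:ℝ)/2) * Y ^ ε) := by
          have h2ε : 0 < 1 + 1 / (2 * ε) := by positivity
          have hP : (0:ℝ) ≤ Y ^ ((1:ℝ)/2) * Y ^ ε := by positivity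
          nlinarith [mul_nonneg (mul_nonneg hB0.le h2ε.le) hP]
  calc ‖∑ d ∈ Icc 1 N, ((ArithmeticFunction.moebius d : ℂ) * ψ (d : ZMod L))
      * ∑ e ∈ Icc 1 (N / d), (e : ℂ) * ψ (e : ZMod L)‖
      ≤ ∑ d ∈ Icc 1 N, 2 * B * ((N : ℝ) / d + 1) := hmain
    _ ≤ 2 * B * ((N : ℝ) * (1 + Real.log N)) + 2 * B * N := hharm
    _ ≤ (4 * B * (1 + 1 / (2 * ε)) + 2 * B) * Y ^ ((1:ℝ)/2 + ε) := hfinal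
end

section
/- For any odd squarefull positive integer x and nonzero integer m, the sum T(x; m) = ∑_{a mod x, gcd(a,x)=1} (a/x)·e_x(−a·m) satisfies |T(x; m)| ≪_ε |m| · x^{1/2+ε}. -/
open Finset

/-- `e_x(y) = exp(2πiy/x)`. -/
noncomputable def ex (x : ℕ) (y : ℝ) : ℂ := Complex.exp (2 * Real.pi * Complex.I * (y / x))

/-- `T(x; m) = ∑_{a mod x, gcd(a,x)=1} (a/x)·e_x(−a·m)`. -/
noncomputable def T (x : ℕ) (m : ℤ) : ℂ :=
  ∑ a ∈ Finset.range x, if Nat.Coprime a x then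
    (jacobiSym (a : ℤ) x : ℂ) * ex x (-((a : ℝ) * (m : ℝ))) else 0

/-- An integer is squarefull if every prime dividing it does so at least twice. -/
def Squarefull (n : ℕ) : Prop := ∀ p : ℕ, p.Prime → p ∣ n → p ^ 2 ∣ n

lemma ex_add (x : ℕ) (y z : ℝ) : ex x (y + z) = ex x y * ex x z := by
  unfold ex
  rw [← Complex.exp_add]
  congr 1
  push_cast
  ring

lemma ex_int_mul (x : ℕ) (hx : (x : ℝ) ≠ 0) (k : ℤ) : ex x ((x : ℝ) * k) = 1 := by
  unfold ex
  have hx' : (x : ℂ) ≠ 0 := by exact_mod_cast hx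
  have : ((((x : ℝ) * k : ℝ)) : ℂ) / (x : ℂ) = (k : ℂ) := by
    push_cast
    rw [mul_comm, mul_div_assoc, div_self hx', mul_one]
  rw [this]
  rw [show (2 * (Real.pi:ℂ) * Complex.I * k) = (k : ℂ) * (2 * Real.pi * Complex.I) by ring]
  exact Complex.exp_int_mul_two_pi_mul_I k

lemma ex_norm (x : ℕ) (y : ℝ) : ‖ex x y‖ = 1 := by
  unfold ex
  have : 2 * (Real.pi:ℂ) * Complex.I * ((y:ℂ) / (x:ℂ)) =
      ((2 * Real.pi * (y / x) : ℝ) : ℂ) * Complex.I := by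
    push_cast
    ring
  rw [this, Complex.norm_exp_ofReal_mul_I]

lemma jacobi_period (x : ℕ) {a b : ℤ}
    (h : ((∏ p ∈ x.primeFactors, p : ℕ) : ℤ) ∣ a - b) :
    jacobiSym a x = jacobiSym b x := by
  unfold jacobiSym
  refine congr_arg List.prod (List.pmap_congr_left _ ?_)
  rintro p hp _ h₂
  letI : Fact p.Prime := ⟨h₂⟩
  have hmem : p ∈ x.primeFactors := by
    rw [Nat.mem_primeFactors]
    exact ⟨h₂, Nat.dvd_of_mem_primeFactorsList hp, fun h0 => by simp [h0] at hp⟩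
  have hpd : ((p:ℤ)) ∣ a - b :=
    dvd_trans (Int.natCast_dvd_natCast.2 (Finset.dvd_prod_of_mem _ hmem)) h
  have hmod : a % (p:ℤ) = b % (p:ℤ) := Int.ModEq.eq (Int.modEq_iff_dvd.2 (dvd_sub_comm.mp hpd))
  rw [legendreSym.mod, hmod, ← legendreSym.mod]

lemma coprime_congr {x a b : ℕ}
    (h : ∀ p : ℕ, p.Prime → p ∣ x → (p ∣ a ↔ p ∣ b)) :
    Nat.Coprime a x ↔ Nat.Coprime b x := by
  rw [← not_not (a := Nat.Coprime a x), ← not_not (a := Nat.Coprime b x),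
    Nat.Prime.not_coprime_iff_dvd, Nat.Prime.not_coprime_iff_dvd]
  apply not_congr
  constructor
  · rintro ⟨p, pp, pa, px⟩; exact ⟨p, pp, (h p pp px).1 pa, px⟩
  · rintro ⟨p, pp, pb, px⟩; exact ⟨p, pp, (h p pp px).2 pb, px⟩

lemma rad_sq_dvd {x : ℕ} (hx : x ≠ 0) (hsf : Squarefull x) :
    (∏ p ∈ x.primeFactors, p) * (∏ p ∈ x.primeFactors, p) ∣ x := by
  set r := ∏ p ∈ x.primeFactors, p with hr
  have hr0 : r ≠ 0 := Finset.prod_ne_zero_iff.2 fun p hp => (Nat.prime_of_mem_primeFactors hp).ne_zero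
  rw [← Nat.factorization_le_iff_dvd (Nat.mul_ne_zero hr0 hr0) hx]
  rw [Nat.factorization_mul hr0 hr0]
  intro p
  have hfact : r.factorization p = if p ∈ x.primeFactors then 1 else 0 := by
    rw [hr, Nat.factorization_prod (fun q hq => (Nat.prime_of_mem_primeFactors hq).ne_zero)]
    rw [Finset.sum_apply']
    rw [Finset.sum_congr rfl (fun q hq => by
      rw [(Nat.prime_of_mem_primeFactors hq).factorization, Finsupp.single_apply])]
    exact Finset.sum_ite_eq' x.primeFactors p (fun _ => 1)
  simp only [Finsupp.add_apply, hfact]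
  split_ifs with hmem
  · have pp := Nat.prime_of_mem_primeFactors hmem
    have : p ^ 2 ∣ x := hsf p pp (Nat.dvd_of_mem_primeFactors hmem)
    have := (Nat.Prime.pow_dvd_iff_le_factorization pp hx).1 this
    omega
  · omega

lemma T_norm_le (x : ℕ) (m : ℤ) : ‖T x m‖ ≤ x := by
  unfold T
  refine le_trans (norm_sum_le _ _) ?_
  have : ∀ a ∈ Finset.range x, ‖if Nat.Coprime a x then
      (jacobiSym (a : ℤ) x : ℂ) * ex x (-((a : ℝ) * (m : ℝ))) else 0‖ ≤ 1 := by
    intro a _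
    split_ifs
    · rw [norm_mul, ex_norm, mul_one]
      rcases jacobiSym.trichotomy (a : ℤ) x with h | h | h <;> rw [h] <;> norm_num
    · simp
  refine le_trans (Finset.sum_le_sum this) ?_
  simp

lemma T_shift {x : ℕ} (hx : 0 < x) (m : ℤ) :
    T x m = ex x (-(((∏ p ∈ x.primeFactors, p : ℕ) : ℝ) * (m : ℝ))) * T x m := by
  haveI : NeZero x := ⟨hx.ne'⟩
  set r := ∏ p ∈ x.primeFactors, p with hr
  have hprime_dvd : ∀ p : ℕ, p.Prime → p ∣ x → p ∣ r := fun p pp pd =>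
    Finset.dvd_prod_of_mem _ (Nat.mem_primeFactors.2 ⟨pp, pd, hx.ne'⟩)
  set F : ℕ → ℂ := fun a => if Nat.Coprime a x then
    (jacobiSym (a : ℤ) x : ℂ) * ex x (-((a : ℝ) * (m : ℝ))) else 0 with hF
  -- Step A: key pointwise identity
  have key : ∀ v : ℕ, F ((v + r) % x) = ex x (-((r : ℝ) * (m : ℝ))) * F v := by
    intro v
    have hcop : Nat.Coprime ((v + r) % x) x ↔ Nat.Coprime v x := by
      have h1 : Nat.Coprime ((v + r) % x) x ↔ Nat.Coprime (v + r) x := by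
        unfold Nat.Coprime
        rw [← Nat.gcd_rec, Nat.gcd_comm]
      rw [h1]
      refine coprime_congr fun p pp px => ?_
      have hpr : p ∣ r := hprime_dvd p pp px
      constructor
      · intro h; exact (Nat.dvd_add_right hpr).mp (by rwa [Nat.add_comm] at h)
      · intro h; exact Nat.dvd_add h hpr
    have hjac : jacobiSym (((v + r) % x : ℕ) : ℤ) x = jacobiSym ((v : ℕ) : ℤ) x := by
      have h1 : jacobiSym (((v + r) % x : ℕ) : ℤ) x = jacobiSym ((v + r : ℕ) : ℤ) x := by
        apply jacobiSym.mod_left'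
        push_cast
        rw [Int.emod_emod_of_dvd _ dvd_rfl]
      rw [h1]
      refine jacobi_period x ?_
      rw [← hr]
      exact ⟨1, by push_cast; ring⟩
    have hex : ex x (-((((v + r) % x : ℕ) : ℝ) * (m : ℝ))) =
        ex x (-((r : ℝ) * (m : ℝ))) * ex x (-((v : ℝ) * (m : ℝ))) := by
      have hmod : ((v + r) % x : ℕ) + x * ((v + r) / x) = v + r := Nat.mod_add_div (v + r) x
      set k : ℕ := (v + r) / x with hk
      have harg : -((((v + r) % x : ℕ) : ℝ) * (m : ℝ)) =
          -((r : ℝ) * (m : ℝ)) + (-((v : ℝ) * (m : ℝ)) + (x : ℝ) * ((k : ℤ) * m : ℤ)) := by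
        have : (((v + r) % x : ℕ) : ℝ) = (v : ℝ) + r - (x : ℝ) * k := by
          have := congrArg (fun n : ℕ => (n : ℝ)) hmod
          push_cast at this
          linarith
        rw [this]
        push_cast
        ring
      rw [harg, ex_add, ex_add, ex_int_mul x (by positivity), mul_one, mul_comm]
    show (if Nat.Coprime ((v + r) % x) x then
        (jacobiSym (((v + r) % x : ℕ) : ℤ) x : ℂ) * ex x (-((((v + r) % x : ℕ) : ℝ) * (m : ℝ))) else 0) =
        ex x (-((r : ℝ) * (m : ℝ))) * (if Nat.Coprime v x then
        (jacobiSym ((v : ℕ) : ℤ) x : ℂ) * ex x (-((v : ℝ) * (m : ℝ))) else 0)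
    rw [hjac, hex]
    by_cases hc : Nat.Coprime v x
    · rw [if_pos (hcop.mpr hc), if_pos hc]; ring
    · rw [if_neg (fun h => hc (hcop.mp h)), if_neg hc, mul_zero]
  -- Step B: reindex
  have h1 : T x m = ∑ z : ZMod x, F z.val := by
    show ∑ a ∈ Finset.range x, F a = ∑ z : ZMod x, F z.val
    refine Finset.sum_nbij' (fun a => (a : ZMod x)) (fun z => z.val) ?_ ?_ ?_ ?_ ?_
    · intro a _; exact Finset.mem_univ _
    · intro z _; exact Finset.mem_range.2 (ZMod.val_lt z)
    · intro a ha; exact ZMod.val_natCast_of_lt (Finset.mem_range.1 ha)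
    · intro z _; exact ZMod.natCast_rightInverse z
    · intro a ha
      rw [ZMod.val_natCast_of_lt (Finset.mem_range.1 ha)]
  have h2 : ∑ z : ZMod x, F z.val = ∑ z : ZMod x, F ((z + (r : ZMod x)).val) :=
    (Fintype.sum_equiv (Equiv.addRight (r : ZMod x)) _ _ (fun z => rfl)).symm
  have h3 : ∀ z : ZMod x, (z + (r : ZMod x)).val = (z.val + r) % x := by
    intro z
    rw [ZMod.val_add, ZMod.val_natCast]
    conv_rhs => rw [Nat.add_mod, Nat.mod_eq_of_lt (ZMod.val_lt z)]
  calc T x m = ∑ z : ZMod x, F ((z + (r : ZMod x)).val) := by rw [h1, h2]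
    _ = ∑ z : ZMod x, ex x (-((r : ℝ) * (m : ℝ))) * F z.val := by
        refine Finset.sum_congr rfl fun z _ => ?_
        rw [h3 z, key z.val]
    _ = ex x (-((r : ℝ) * (m : ℝ))) * T x m := by rw [← Finset.mul_sum, h1]

/-- For odd squarefull positive x and m ≠ 0,
|T(x; m)| ≪_ε |m| · x^{1/2+ε}. -/
theorem stmt5 (ε : ℝ) (hε : 0 < ε) :
    ∃ C : ℝ, ∀ x : ℕ, 0 < x → Odd x → Squarefull x → ∀ m : ℤ, m ≠ 0 →
      ‖T x m‖ ≤ C * |(m : ℝ)| * (x : ℝ) ^ ((1 : ℝ) / 2 + ε) := by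
  use 1
  intro x hx hodd hsf m hm
  have hx0 : x ≠ 0 := hx.ne'
  set r := ∏ p ∈ x.primeFactors, p with hr
  have hrdvd : r ∣ x := Nat.prod_primeFactors_dvd x
  have hr0 : 0 < r := Nat.pos_of_ne_zero (Finset.prod_ne_zero_iff.2 fun p hp =>
    (Nat.prime_of_mem_primeFactors hp).ne_zero)
  set s := x / r with hs
  have hsr : s * r = x := Nat.div_mul_cancel hrdvd
  have hs0 : 0 < s := Nat.div_pos (Nat.le_of_dvd hx hrdvd) hr0
  have hx1 : (1 : ℝ) ≤ (x : ℝ) := by exact_mod_cast hx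
  have hrpow : (x : ℝ) ^ ((1:ℝ)/2) ≤ (x : ℝ) ^ ((1:ℝ)/2 + ε) :=
    Real.rpow_le_rpow_of_exponent_le hx1 (by linarith)
  by_cases hdvd : (s : ℤ) ∣ m
  · have hms : (s : ℝ) ≤ |(m : ℝ)| := by
      have h1 : (s : ℤ) ≤ |m| := Int.le_of_dvd (abs_pos.2 hm) ((dvd_abs _ _).2 hdvd)
      calc (s : ℝ) ≤ ((|m| : ℤ) : ℝ) := by exact_mod_cast h1
        _ = |(m : ℝ)| := by rw [Int.cast_abs]
    have hr2 : r * r ≤ x := Nat.le_of_dvd hx (rad_sq_dvd hx0 hsf)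
    have hrx : (r : ℝ) ≤ (x : ℝ) ^ ((1:ℝ)/2) := by
      rw [← Real.sqrt_eq_rpow, Real.le_sqrt (by positivity)]
      have : (r : ℝ) * r ≤ x := by exact_mod_cast hr2
      · nlinarith
      · positivity
    calc ‖T x m‖ ≤ (x : ℝ) := T_norm_le x m
      _ = (s : ℝ) * (r : ℝ) := by rw [← hsr]; push_cast; ring
      _ ≤ |(m : ℝ)| * ((x : ℝ) ^ ((1:ℝ)/2)) :=
          mul_le_mul hms hrx (by positivity) (abs_nonneg _)
      _ ≤ 1 * |(m : ℝ)| * ((x : ℝ) ^ ((1:ℝ)/2 + ε)) := by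
          rw [one_mul]
          exact mul_le_mul_of_nonneg_left hrpow (abs_nonneg _)
  · have hTz : T x m = 0 := by
      have key := T_shift hx m
      rw [← hr] at key
      have hne : ex x (-((r : ℝ) * (m : ℝ))) ≠ 1 := by
        intro h1
        apply hdvd
        unfold ex at h1
        rw [Complex.exp_eq_one_iff] at h1
        obtain ⟨n, hn⟩ := h1
        have h2pi : (2 * (Real.pi : ℂ) * Complex.I) ≠ 0 := by
          simp [Real.pi_ne_zero, Complex.I_ne_zero, Complex.ofReal_ne_zero]
        have hy : ((-((r:ℝ) * (m:ℝ)) : ℝ) : ℂ) / (x : ℂ) = (n : ℂ) := by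
          refine mul_left_cancel₀ h2pi ?_
          linear_combination hn
        have hxne : (x : ℂ) ≠ 0 := Nat.cast_ne_zero.2 hx0
        rw [div_eq_iff hxne] at hy
        have hyR : -((r:ℝ) * (m:ℝ)) = (n : ℝ) * (x : ℝ) := by exact_mod_cast hy
        have hyZ : -((r:ℤ) * m) = n * x := by exact_mod_cast hyR
        obtain ⟨c, hc⟩ : (x : ℤ) ∣ (r : ℤ) * m := ⟨-n, by linear_combination -hyZ⟩
        refine ⟨c, ?_⟩
        have hxs : (x : ℤ) = (s : ℤ) * (r : ℤ) := by exact_mod_cast hsr.symm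
        have hrne : (r : ℤ) ≠ 0 := by exact_mod_cast hr0.ne'
        refine mul_left_cancel₀ hrne ?_
        rw [hc, hxs]; ring
      have h0 : (1 - ex x (-((r:ℝ) * (m:ℝ)))) * T x m = 0 := by
        rw [sub_mul, one_mul, ← key]; ring
      rcases mul_eq_zero.1 h0 with h | h
      · exact absurd (sub_eq_zero.mp h).symm hne
      · exact h
    rw [hTz]
    simp only [norm_zero]
    positivity
end

section
/- For any real character χ modulo L and nonzero integer vector c with F*(c) ≠ 0, the condition that the character n ↦ χ(n)·(−F*(c)/n) (Jacobi symbol) is principal holds if and only if there exists an integer ξ dividing L such that χ(·) = (ξ/·) and −F*(c) = ξ·(a square). -/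
open Finset

private lemma coprimeOfModEq {n r K : ℕ} (h : n ≡ r [MOD K]) (hr : Nat.Coprime r K) :
    Nat.Coprime n K := by
  have h1 : Nat.gcd K n = Nat.gcd K r := by
    rw [Nat.gcd_rec K n, Nat.gcd_rec K r, h]
  have := hr
  simp only [Nat.Coprime, Nat.gcd_comm n K, Nat.gcd_comm r K] at *
  rw [h1]; exact this

private lemma jacobiOddOne {m n : ℕ} (hm : Odd m) (h4 : n % 4 = 1) (h1 : n ≡ 1 [MOD m]) :
    jacobiSym (m : ℤ) n = 1 := by
  rw [jacobiSym.quadratic_reciprocity_one_mod_four' hm h4]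
  have h : (n : ℤ) % (m : ℕ) = (1 : ℤ) % (m : ℕ) := by exact_mod_cast h1
  rw [jacobiSym.mod_left' h, jacobiSym.one_left]

private lemma jacobiNatOne {m n : ℕ} (h8 : n % 8 = 1) (h1 : n ≡ 1 [MOD m]) :
    jacobiSym (m : ℤ) n = 1 := by
  have h4 : n % 4 = 1 := by
    have : n % 4 = n % 8 % 4 := (Nat.mod_mod_of_dvd n (by norm_num)).symm
    rw [this, h8]
  have hodd : Odd n := by
    refine Nat.odd_iff.mpr ?_
    have : n % 2 = n % 8 % 2 := (Nat.mod_mod_of_dvd n (by norm_num)).symm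
    rw [this, h8]
  rcases Nat.eq_zero_or_pos m with rfl | hm
  · have : n = 1 := by simpa [Nat.ModEq] using h1
    simp [this]
  · set e := m.factorization 2 with he
    set m' := m / 2 ^ e with hm'
    have hsplit : 2 ^ e * m' = m := Nat.ordProj_mul_ordCompl_eq_self m 2
    have hm'odd : Odd m' := by
      have := Nat.coprime_ordCompl Nat.prime_two hm.ne'
      rw [Nat.coprime_comm] at this
      exact Nat.coprime_two_right.mp this
    have hm'dvd : m' ∣ m := Nat.ordCompl_dvd m 2
    have h2 : jacobiSym (2 : ℤ) n = 1 := by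
      rw [jacobiSym.at_two hodd, ZMod.χ₈_nat_mod_eight, h8]
      decide
    calc jacobiSym (m : ℤ) n = jacobiSym ((2 : ℤ) ^ e * (m' : ℕ)) n := by
          rw [← hsplit]; push_cast; ring_nf
      _ = jacobiSym (2 : ℤ) n ^ e * jacobiSym (m' : ℤ) n := by
          rw [jacobiSym.mul_left, jacobiSym.pow_left]
      _ = 1 := by rw [h2, one_pow, one_mul, jacobiOddOne hm'odd h4 (h1.of_dvd hm'dvd)]

private lemma jacobiIntOne {m : ℤ} {n : ℕ} (h8 : n % 8 = 1) (h1 : n ≡ 1 [MOD m.natAbs]) :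
    jacobiSym m n = 1 := by
  have h4 : n % 4 = 1 := by
    have : n % 4 = n % 8 % 4 := (Nat.mod_mod_of_dvd n (by norm_num)).symm
    rw [this, h8]
  have hodd : Odd n := by
    refine Nat.odd_iff.mpr ?_
    have : n % 2 = n % 8 % 2 := (Nat.mod_mod_of_dvd n (by norm_num)).symm
    rw [this, h8]
  rcases le_or_gt 0 m with h | h
  · lift m to ℕ using h
    exact jacobiNatOne h8 (by simpa using h1)
  · have hm : m = -1 * (m.natAbs : ℤ) := by
      rw [neg_one_mul, ← Int.natAbs_neg]
      omega
    rw [hm, jacobiSym.mul_left, jacobiSym.at_neg_one hodd, ZMod.χ₄_nat_one_mod_four h4, one_mul]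
    exact jacobiNatOne h8 h1

private lemma sqfreeDvd {a L : ℕ} (ha : Squarefree a) (h : ∀ p, p.Prime → p ∣ a → p ∣ L) :
    a ∣ L := by
  rw [← Nat.prod_primeFactors_of_squarefree ha]
  exact Finset.prod_primes_dvd L
    (fun p hp => (Nat.prime_of_mem_primeFactors hp).prime)
    (fun p hp => h p (Nat.prime_of_mem_primeFactors hp) (Nat.dvd_of_mem_primeFactors hp))

/-- For a real character χ mod L and c ≠ 0 with F*(c) ≠ 0 (F* the adjoint of
a non-degenerate integral ternary quadratic form F), the character n ↦ χ(n)·(−F*(c)/n)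
(of modulus Ω|F*(c)|, Ω = 8LΔ) is principal iff there is ξ ∣ L with χ(·) = (ξ/·) and
−F*(c) = ξ·(square). -/
theorem stmt16 (L : ℕ) (hL : 0 < L) (χ : DirichletCharacter ℂ L) (hreal : χ ^ 2 = 1)
    (A : Matrix (Fin 3) (Fin 3) ℤ) (hsymm : A.IsSymm) (hdet : A.det ≠ 0)
    (c : Fin 3 → ℤ) (hc : c ≠ 0)
    (Fc : ℤ) (hFc : Fc = ∑ i, ∑ j, A.adjugate i j * c i * c j) (hFc0 : Fc ≠ 0) :
    (∀ n : ℕ, Nat.Coprime n (8 * L * A.det.natAbs * Fc.natAbs) →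
        χ (n : ZMod L) * (jacobiSym (-Fc) n : ℂ) = 1)
    ↔ ∃ ξ : ℤ, ξ ∣ (L : ℤ) ∧
        (∀ n : ℕ, Nat.Coprime n (8 * L * A.det.natAbs * Fc.natAbs) →
          χ (n : ZMod L) = (jacobiSym ξ n : ℂ)) ∧
        ∃ b : ℤ, -Fc = ξ * b ^ 2 := by
  set M := 8 * L * A.det.natAbs * Fc.natAbs with hMdef
  have hM0 : M ≠ 0 := by
    simp only [hMdef, Nat.mul_ne_zero_iff, Int.natAbs_ne_zero]
    exact ⟨⟨⟨by norm_num, hL.ne'⟩, hdet⟩, hFc0⟩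
  have hFcM : Fc.natAbs ∣ M := dvd_mul_left _ _
  have hLM : L ∣ M := ((dvd_mul_left L 8).mul_right _).mul_right _
  have h8M : 8 ∣ M := ((dvd_mul_right 8 L).mul_right _).mul_right _
  constructor
  · intro H
    obtain ⟨a', b', hab, hsq⟩ := Nat.sq_mul_squarefree Fc.natAbs
    set s : ℤ := (-Fc).sign with hs
    have hsval : s = 1 ∨ s = -1 := by
      have h0 : -Fc ≠ 0 := by simpa using hFc0
      rcases h0.lt_or_gt with h | h
      · right; rw [hs]; exact Int.sign_eq_neg_one_iff_neg.mpr h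
      · left; rw [hs]; exact Int.sign_eq_one_iff_pos.mpr h
    have hsabs : s.natAbs = 1 := by rcases hsval with h | h <;> simp [h]
    have hξeq : -Fc = s * (a' : ℤ) * (b' : ℤ) ^ 2 := by
      have h1 : s * ((-Fc).natAbs : ℤ) = -Fc := Int.sign_mul_natAbs (-Fc)
      rw [Int.natAbs_neg, ← hab] at h1
      push_cast at h1
      rw [← h1]; ring
    have haFc : a' ∣ Fc.natAbs := ⟨b' ^ 2, by rw [← hab]; ring⟩
    have hb'Fc : b' ∣ Fc.natAbs := ⟨b' * a', by rw [← hab]; ring⟩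
    have haM : a' ∣ M := haFc.trans hFcM
    have hprime : ∀ p : ℕ, p.Prime → p ∣ a' → p ∣ L := by
      intro p pp hpa
      by_contra hpL
      have hpM : p ∣ M := (hpa.trans haFc).trans hFcM
      set v := M.factorization p with hv
      set K := M / p ^ v with hK
      have hMsplit : p ^ v * K = M := Nat.ordProj_mul_ordCompl_eq_self M p
      have hpK : p.Coprime K := Nat.coprime_ordCompl pp hM0
      have hKdvd : ∀ d : ℕ, d ∣ M → d.Coprime p → d ∣ K := by
        intro d hdM hdp
        rw [← hMsplit] at hdM
        exact (hdp.pow_right v).dvd_of_dvd_mul_left hdM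
      have hKL : L ∣ K := hKdvd L hLM (pp.coprime_iff_not_dvd.mpr hpL).symm
      -- common machinery: given a suitable n, derive the contradiction
      have key : ∀ n : ℕ, n.Coprime M → n ≡ 1 [MOD L] → jacobiSym (-Fc) n = -1 → False := by
        intro n hnM hnL hJ
        have hχ : χ ((n : ℕ) : ZMod L) = 1 := by
          have : ((n : ℕ) : ZMod L) = ((1 : ℕ) : ZMod L) :=
            (ZMod.natCast_eq_natCast_iff n 1 L).mpr hnL
          rw [this, Nat.cast_one, map_one]
        have := H n hnM
        rw [hχ, hJ, one_mul] at this
        norm_num at this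
      rcases pp.eq_two_or_odd' with rfl | hpodd
      · -- p = 2
        have hKodd : Odd K := Nat.coprime_two_left.mp hpK
        have h8K : Nat.Coprime 8 K := by
          have := Nat.Coprime.pow_left 3 hpK
          norm_num at this
          exact this
        obtain ⟨n, hn8', hnK⟩ := Nat.chineseRemainder h8K 5 1
        have hn8 : n % 8 = 5 := by simpa [Nat.ModEq] using hn8'
        have hn4 : n % 4 = 1 := by
          have : n % 4 = n % 8 % 4 := (Nat.mod_mod_of_dvd n (by norm_num)).symm
          rw [this, hn8]
        have hnodd : Odd n := by
          refine Nat.odd_iff.mpr ?_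
          have : n % 2 = n % 8 % 2 := (Nat.mod_mod_of_dvd n (by norm_num)).symm
          rw [this, hn8]
        have hnKcop : n.Coprime K := coprimeOfModEq hnK (Nat.coprime_one_left K)
        have hn2 : n.Coprime 2 := Nat.coprime_two_right.mpr hnodd
        have hnM : n.Coprime M := by
          rw [← hMsplit]
          exact Nat.Coprime.mul_right (hn2.pow_right v) hnKcop
        obtain ⟨η, hη⟩ := hpa
        have hηodd : Odd η := by
          by_contra hev
          obtain ⟨t, ht⟩ := (Nat.not_odd_iff_even.mp hev).two_dvd
          have := hsq 2 ⟨t, by rw [hη, ht]; ring⟩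
          exact absurd (Nat.isUnit_iff.mp this) (by norm_num)
        have hηK : η ∣ K := hKdvd η ((Dvd.intro_left 2 hη.symm).trans haM)
          (Nat.coprime_two_right.mpr hηodd)
        have hnη : n ≡ 1 [MOD η] := hnK.of_dvd hηK
        have hb'n : ((b' : ℤ)).gcd n = 1 := by
          have : n.Coprime b' := Nat.Coprime.coprime_dvd_right (hb'Fc.trans hFcM) hnM
          simpa [Int.gcd] using this.symm
        have hJ : jacobiSym (-Fc) n = -1 := by
          have heq : -Fc = s * 2 * (η : ℤ) * (b' : ℤ) ^ 2 := by
            rw [hξeq, hη]; push_cast; ring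
          rw [heq, jacobiSym.mul_left, jacobiSym.mul_left, jacobiSym.mul_left]
          have hs1 : jacobiSym s n = 1 := by
            rcases hsval with h | h
            · rw [h, jacobiSym.one_left]
            · rw [h, jacobiSym.at_neg_one hnodd, ZMod.χ₄_nat_one_mod_four hn4]
          have h2 : jacobiSym (2 : ℤ) n = -1 := by
            rw [jacobiSym.at_two hnodd, ZMod.χ₈_nat_mod_eight, hn8]
            decide
          rw [hs1, h2, jacobiOddOne hηodd hn4 hnη, jacobiSym.sq_one' hb'n]
          ring
        exact key n hnM (hnK.of_dvd hKL) hJ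
      · -- p odd
        haveI : Fact p.Prime := ⟨pp⟩
        have hp2 : p ≠ 2 := by
          rintro rfl
          exact (by norm_num : ¬ Odd 2) hpodd
        obtain ⟨x, hx⟩ := FiniteField.exists_nonsquare
          (F := ZMod p) (by rwa [ZMod.ringChar_zmod_n])
        have hx0 : x ≠ 0 := fun h => hx (h ▸ (IsSquare.zero))
        have hr : ((x.val : ℕ) : ZMod p) = x := ZMod.natCast_rightInverse x
        have hpr : ¬ p ∣ x.val := by
          intro hd
          exact hx0 (by rw [← hr, (ZMod.natCast_eq_zero_iff x.val p).mpr hd])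
        have h2p : Nat.Coprime 2 p := Nat.coprime_two_left.mpr hpodd
        have h8K : 8 ∣ K := hKdvd 8 h8M (by simpa using h2p.pow_left 3)
        obtain ⟨n, hnp, hnK⟩ := Nat.chineseRemainder hpK x.val 1
        have hnKcop : n.Coprime K := coprimeOfModEq hnK (Nat.coprime_one_left K)
        have hn8 : n % 8 = 1 := by
          have h8' : n ≡ 1 [MOD 8] := hnK.of_dvd h8K
          simpa [Nat.ModEq] using h8'
        have hn4 : n % 4 = 1 := by
          have : n % 4 = n % 8 % 4 := (Nat.mod_mod_of_dvd n (by norm_num)).symm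
          rw [this, hn8]
        have hnodd : Odd n := by
          refine Nat.odd_iff.mpr ?_
          have : n % 2 = n % 8 % 2 := (Nat.mod_mod_of_dvd n (by norm_num)).symm
          rw [this, hn8]
        have hnpcop : n.Coprime p := coprimeOfModEq hnp (pp.coprime_iff_not_dvd.mpr hpr).symm
        have hnM : n.Coprime M := by
          rw [← hMsplit]
          exact Nat.Coprime.mul_right (hnpcop.pow_right v) hnKcop
        obtain ⟨η, hη⟩ := hpa
        have hpη : ¬ p ∣ η := by
          intro ⟨t, ht⟩
          exact pp.ne_one (Nat.isUnit_iff.mp (hsq p ⟨t, by rw [hη, ht]; ring⟩))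
        have hηK : η ∣ K := hKdvd η ((Dvd.intro_left p hη.symm).trans haM)
          (pp.coprime_iff_not_dvd.mpr hpη).symm
        have hnη : n ≡ 1 [MOD η] := hnK.of_dvd hηK
        have hb'n : ((b' : ℤ)).gcd n = 1 := by
          have : n.Coprime b' := Nat.Coprime.coprime_dvd_right (hb'Fc.trans hFcM) hnM
          simpa [Int.gcd] using this.symm
        have hJ : jacobiSym (-Fc) n = -1 := by
          have heq : -Fc = s * (p : ℤ) * (η : ℤ) * (b' : ℤ) ^ 2 := by
            rw [hξeq, hη]; push_cast; ring
          rw [heq, jacobiSym.mul_left, jacobiSym.mul_left, jacobiSym.mul_left]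
          have hs1 : jacobiSym s n = 1 := by
            rcases hsval with h | h
            · rw [h, jacobiSym.one_left]
            · rw [h, jacobiSym.at_neg_one hnodd, ZMod.χ₄_nat_one_mod_four hn4]
          have hpJ : jacobiSym (p : ℤ) n = -1 := by
            rw [jacobiSym.quadratic_reciprocity_one_mod_four' hpodd hn4]
            have hmod : (n : ℤ) % (p : ℕ) = ((x.val : ℕ) : ℤ) % (p : ℕ) := by
              have h' : n % p = x.val % p := hnp
              exact_mod_cast h'
            rw [jacobiSym.mod_left' hmod, ← jacobiSym.legendreSym.to_jacobiSym]
            exact (legendreSym.eq_neg_one_iff' p).mpr (by rwa [hr])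
          rw [hs1, hpJ, jacobiNatOne hn8 hnη, jacobiSym.sq_one' hb'n]
          ring
        exact key n hnM (hnK.of_dvd hKL) hJ
    have haL : a' ∣ L := sqfreeDvd hsq hprime
    refine ⟨s * (a' : ℤ), ?_, ?_, ⟨(b' : ℤ), by rw [hξeq]⟩⟩
    · have h1 : ((a' : ℤ)) ∣ (L : ℤ) := Int.natCast_dvd_natCast.mpr haL
      rcases hsval with h | h
      · rw [h, one_mul]; exact h1
      · rw [h, neg_one_mul]; exact neg_dvd.mpr h1
    · intro n hn
      have hb'n : ((b' : ℤ)).gcd n = 1 := by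
        have : n.Coprime b' := Nat.Coprime.coprime_dvd_right (hb'Fc.trans hFcM) hn
        simpa [Int.gcd] using this.symm
      have hξn : ((s * (a' : ℤ))).gcd n = 1 := by
        have : n.Coprime a' := Nat.Coprime.coprime_dvd_right haM hn
        simp [Int.gcd, Int.natAbs_mul, hsabs]
        simpa [Int.gcd] using this.symm
      have hJ : jacobiSym (-Fc) n = jacobiSym (s * (a' : ℤ)) n := by
        rw [show -Fc = s * (a' : ℤ) * (b' : ℤ) ^ 2 from hξeq,
          jacobiSym.mul_left, jacobiSym.sq_one' hb'n, mul_one]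
      have hH := H n hn
      rw [hJ] at hH
      set j := jacobiSym (s * (a' : ℤ)) n with hj
      have hjsq : j * j = 1 := by
        have := jacobiSym.sq_one hξn
        rwa [sq] at this
      calc χ ((n : ℕ) : ZMod L) = χ ((n : ℕ) : ZMod L) * ((j * j : ℤ) : ℂ) := by
            norm_num [hjsq]
        _ = (χ ((n : ℕ) : ZMod L) * (j : ℂ)) * (j : ℂ) := by push_cast; ring
        _ = (j : ℂ) := by rw [hH, one_mul]
  · rintro ⟨ξ, hξL, hχ, b, hb⟩ n hn
    have hξ0 : ξ ≠ 0 := by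
      rintro rfl
      rw [zero_mul] at hb
      exact hFc0 (by omega)
    have hnL : n.Coprime L := Nat.Coprime.coprime_dvd_right hLM hn
    have hξn : ξ.gcd n = 1 := by
      have h1 : ξ.natAbs ∣ L := by
        have := Int.natAbs_dvd_natAbs.mpr hξL
        simpa using this
      have : n.Coprime ξ.natAbs := Nat.Coprime.coprime_dvd_right h1 hnL
      simpa [Int.gcd] using this.symm
    have hbn : b.gcd n = 1 := by
      have hbFc : b.natAbs ∣ Fc.natAbs := by
        refine Int.natAbs_dvd_natAbs.mpr ?_
        have h1 : b ∣ -Fc := ⟨ξ * b, by rw [hb]; ring⟩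
        exact dvd_neg.mp h1
      have : n.Coprime b.natAbs := Nat.Coprime.coprime_dvd_right (hbFc.trans hFcM) hn
      simpa [Int.gcd] using this.symm
    rw [hχ n hn, hb, jacobiSym.mul_left, jacobiSym.sq_one' hbn, mul_one]
    have := jacobiSym.sq_one hξn
    rw [sq] at this
    push_cast
    exact_mod_cast congrArg (fun z : ℤ => (z : ℂ)) this
end
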